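/- For every b > 1/4, sup_{m ∈ ℤ} Σ_{n ≥ 1} ⟨m − n²⟩^{−2b} < ∞, where ⟨x⟩ = 1 + |x|. -/

import Mathlib

open Finset Real

/-- Partial-sum bound `∑_{d<k} (d+1)^{-s} ≤ k^{1-s}/(1-s)` for `0 < s < 1`. -/
lemma jb_sum_rpow_le {s : ℝ} (hs0 : 0 < s) (hs1 : s < 1) (k : ℕ) :
    ∑ d ∈ range k, ((d : ℝ) + 1) ^ (-s) ≤ (k : ℝ) ^ (1 - s) / (1 - s) := by
  have h1s : (0:ℝ) < 1 - s := by linarith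
  induction k with
  | zero => simp [Real.zero_rpow (by linarith : (1:ℝ) - s ≠ 0)]
  | succ k ih =>
    rw [sum_range_succ]
    have ht : (0:ℝ) < (k:ℝ) + 1 := by positivity
    have key : ((k:ℝ) + 1) ^ (-s) ≤ (((k:ℝ)+1) ^ (1-s) - (k:ℝ) ^ (1-s)) / (1-s) := by
      have amgm : (k:ℝ) ^ (1-s) * ((k:ℝ)+1) ^ s ≤ (1-s) * k + s * ((k:ℝ)+1) :=
        Real.geom_mean_le_arith_mean2_weighted (by linarith) hs0.le (by positivity)
          (by positivity) (by ring)
      have hts : ((k:ℝ)+1) ^ s * ((k:ℝ)+1) ^ (-s) = 1 := by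
        rw [← Real.rpow_add ht]; simp
      have h2 : (k:ℝ) ^ (1-s) ≤ ((k:ℝ) + s) * ((k:ℝ)+1) ^ (-s) := by
        have := mul_le_mul_of_nonneg_right amgm
          (Real.rpow_nonneg ht.le (-s))
        calc (k:ℝ) ^ (1-s) = (k:ℝ) ^ (1-s) * (((k:ℝ)+1) ^ s * ((k:ℝ)+1) ^ (-s)) := by
              rw [hts, mul_one]
          _ = (k:ℝ) ^ (1-s) * ((k:ℝ)+1) ^ s * ((k:ℝ)+1) ^ (-s) := by ring
          _ ≤ ((1-s) * k + s * ((k:ℝ)+1)) * ((k:ℝ)+1) ^ (-s) := this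
          _ = ((k:ℝ) + s) * ((k:ℝ)+1) ^ (-s) := by ring_nf
      have h3 : ((k:ℝ)+1) ^ (1-s) = ((k:ℝ)+1) * ((k:ℝ)+1) ^ (-s) := by
        rw [show (1:ℝ)-s = 1 + -s by ring, Real.rpow_add ht, Real.rpow_one]
      rw [le_div_iff₀ h1s]
      calc ((k:ℝ)+1) ^ (-s) * (1-s) = ((k:ℝ)+1) * ((k:ℝ)+1) ^ (-s) - ((k:ℝ)+s) * ((k:ℝ)+1) ^ (-s) := by
            ring
        _ ≤ (((k:ℝ)+1) ^ (1-s) - (k:ℝ) ^ (1-s)) := by rw [h3]; linarith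
    push_cast
    calc ∑ d ∈ range k, ((d : ℝ) + 1) ^ (-s) + ((k:ℝ) + 1) ^ (-s)
        ≤ (k:ℝ) ^ (1-s) / (1-s) + (((k:ℝ)+1) ^ (1-s) - (k:ℝ) ^ (1-s)) / (1-s) := by
          exact add_le_add ih key
      _ = ((k:ℝ)+1) ^ (1-s) / (1-s) := by ring

set_option maxHeartbeats 1600000 in
/-- Main estimate for exponents `c` with `1/4 < c < 1/2`. -/
lemma jb_key {c : ℝ} (hc0 : 1/4 < c) (hc1 : c < 1/2) :
    ∃ C : ℝ, ∀ m : ℤ,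
      Summable (fun n : ℕ => (1 + |(m : ℝ) - ((n : ℝ) + 1) ^ 2|) ^ (-(2 * c))) ∧
      (∑' n : ℕ, (1 + |(m : ℝ) - ((n : ℝ) + 1) ^ 2|) ^ (-(2 * c))) ≤ C := by
  have hc0' : (0:ℝ) < c := by linarith
  -- the summable majorant for the tail
  set g : ℕ → ℝ := fun n => 2 ^ (2*c) * ((n:ℝ) + 1) ^ (-(4*c)) with hg_def
  have hg : Summable g := by
    apply Summable.mul_left
    have : Summable (fun n : ℕ => ((n:ℝ)) ^ (-(4*c))) :=
      Real.summable_nat_rpow.2 (by linarith)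
    have := (summable_nat_add_iff 1).2 this
    simpa using this
  have hg0 : ∀ n, 0 ≤ g n := fun n => by positivity
  set C1 : ℝ := ∑' n, g n with hC1_def
  refine ⟨2 + 2/(1 - 2*c) + C1, fun m => ?_⟩
  set f : ℕ → ℝ := fun n => (1 + |(m : ℝ) - ((n : ℝ) + 1) ^ 2|) ^ (-(2 * c)) with hf_def
  have hbase : ∀ n : ℕ, (1:ℝ) ≤ 1 + |(m : ℝ) - ((n : ℝ) + 1) ^ 2| := fun n => by
    simp [abs_nonneg]
  have hf0 : ∀ n, 0 ≤ f n := fun n => Real.rpow_nonneg (by linarith [hbase n]) _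
  -- pointwise tail bound
  have tail_bound : ∀ n : ℕ, 2 * (m:ℝ) ≤ ((n:ℝ)+1)^2 → f n ≤ g n := by
    intro n hn
    have h1 : ((n:ℝ)+1)^2 / 2 ≤ 1 + |(m : ℝ) - ((n : ℝ) + 1) ^ 2| := by
      have : (m:ℝ) - ((n:ℝ)+1)^2 ≤ 0 := by nlinarith
      rw [abs_of_nonpos this]; nlinarith
    have hpos : (0:ℝ) < ((n:ℝ)+1)^2 / 2 := by positivity
    have h2 : f n ≤ (((n:ℝ)+1)^2 / 2) ^ (-(2*c)) :=
      Real.rpow_le_rpow_of_nonpos hpos h1 (by linarith)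
    refine h2.trans_eq ?_
    have hA : (((n:ℝ)+1)^2) ^ (-(2*c)) = ((n:ℝ)+1) ^ (-(4*c)) := by
      rw [← Real.rpow_natCast ((n:ℝ)+1) 2, ← Real.rpow_mul (by positivity)]
      congr 1; push_cast; ring
    rw [Real.div_rpow (by positivity) (by norm_num), hA,
      Real.rpow_neg (by norm_num : (0:ℝ) ≤ 2) (2*c)]
    rw [div_eq_mul_inv, inv_inv, mul_comm]
  by_cases hm : m ≤ 0
  · -- all terms are in the tail
    have hfg : ∀ n, f n ≤ g n := fun n => tail_bound n (by
      have : (m:ℝ) ≤ 0 := by exact_mod_cast hm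
      nlinarith)
    have hsum : Summable f := Summable.of_nonneg_of_le hf0 hfg hg
    refine ⟨hsum, ?_⟩
    have : ∑' n, f n ≤ C1 := Summable.tsum_le_tsum hfg hsum hg
    have hC : 0 ≤ 2 + 2/(1-2*c) := by
      have : (0:ℝ) < 1 - 2*c := by linarith
      positivity
    linarith
  · push_neg at hm
    set M : ℕ := m.toNat with hM_def
    have hmM : (m:ℝ) = (M:ℝ) := by
      rw [hM_def]; exact_mod_cast (Int.toNat_of_nonneg hm.le).symm
    set r : ℕ := Nat.sqrt M with hr_def
    have hM1 : 1 ≤ M := by omega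
    have hr1 : 1 ≤ r := by
      rw [hr_def]; exact Nat.sqrt_pos.2 (by omega)
    have hr1R : (1:ℝ) ≤ (r:ℝ) := by exact_mod_cast hr1
    have hlow : ((r:ℝ))^2 ≤ (m:ℝ) := by
      rw [hmM]; exact_mod_cast Nat.sqrt_le' M
    have hhigh : (m:ℝ) ≤ ((r:ℝ)+1)^2 - 1 := by
      rw [hmM]
      have h2 : M + 1 ≤ (r+1)^2 := Nat.lt_succ_sqrt' M
      have h3 : (M:ℝ) + 1 ≤ ((r:ℝ)+1)^2 := by exact_mod_cast h2
      linarith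
    set N : ℕ := 2*r + 1 with hN_def
    -- tail summable & bounded
    have htail_le : ∀ n : ℕ, f (n + N) ≤ g (n + N) := by
      intro n
      apply tail_bound
      have hn : (2*(r:ℝ) + 2) ≤ ((n + N : ℕ):ℝ) + 1 := by
        push_cast [hN_def]; linarith [Nat.cast_nonneg (α := ℝ) n]
      nlinarith [hhigh, Nat.cast_nonneg (α := ℝ) n]
    have hgN : Summable (fun n => g (n + N)) := hg.comp_injective (add_left_injective N)
    have htail_sum : Summable (fun n => f (n + N)) :=
      Summable.of_nonneg_of_le (fun n => hf0 _) htail_le hgN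
    have hsum : Summable f := (summable_nat_add_iff N).1 htail_sum
    refine ⟨hsum, ?_⟩
    have hsplit := Summable.sum_add_tsum_nat_add (f := f) N hsum
    -- tail estimate
    have htail : (∑' n, f (n + N)) ≤ C1 := by
      have h1 : (∑' n, f (n + N)) ≤ ∑' n, g (n + N) := Summable.tsum_le_tsum htail_le htail_sum hgN
      have h2 : (∑' n, g (n + N)) ≤ C1 := by
        rw [hC1_def, ← Summable.sum_add_tsum_nat_add (f := g) N hg]
        have : 0 ≤ ∑ i ∈ range N, g i := Finset.sum_nonneg fun i _ => hg0 i
        linarith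
      linarith
    -- head estimate
    set h : ℕ → ℝ := fun d => (1 + (d:ℝ) * (r:ℝ)) ^ (-(2*c)) with hh_def
    have hh0 : ∀ d, 0 ≤ h d := fun d => Real.rpow_nonneg (by positivity) _
    have hhead : ∑ n ∈ range N, f n ≤ 2 + 2/(1 - 2*c) := by
      have hsplit2 : ∑ n ∈ range N, f n
          = ∑ n ∈ range r, f n + ∑ n ∈ Ico r N, f n := by
        rw [range_eq_Ico, ← Finset.sum_Ico_consecutive _ (Nat.zero_le r) (by omega),
          ← range_eq_Ico]
      -- Part A
      have hA : ∑ n ∈ range r, f n ≤ ∑ d ∈ range r, h d := by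
        rw [← Finset.sum_range_reflect h r]
        apply Finset.sum_le_sum
        intro n hn
        rw [Finset.mem_range] at hn
        have hcast : ((r - 1 - n : ℕ):ℝ) = (r:ℝ) - 1 - (n:ℝ) := by
          have : n ≤ r - 1 := by omega
          push_cast [Nat.cast_sub this, Nat.cast_sub hr1]
          ring
        rw [hh_def]
        simp only [hcast]
        have hnR : ((n:ℝ)) ≤ (r:ℝ) - 1 := by
          have : (n:ℕ) ≤ r - 1 := by omega
          have := (Nat.cast_le (α := ℝ)).2 this
          rw [Nat.cast_sub hr1] at this; push_cast at this; linarith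
        have hb1 : (1:ℝ) ≤ 1 + ((r:ℝ) - 1 - n) * r := by nlinarith
        have habs : (m:ℝ) - ((n:ℝ)+1)^2 ≥ 0 := by nlinarith
        have hge : 1 + ((r:ℝ) - 1 - n) * r ≤ 1 + |(m : ℝ) - ((n : ℝ) + 1) ^ 2| := by
          rw [abs_of_nonneg habs]; nlinarith
        exact Real.rpow_le_rpow_of_nonpos (by linarith) hge (by linarith)
      -- Part B
      have hB : ∑ n ∈ Ico r N, f n ≤ ∑ d ∈ range (r+1), h d := by
        have : ∑ n ∈ Ico r N, f n ≤ ∑ n ∈ Ico r N, h (n - r) := by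
          apply Finset.sum_le_sum
          intro n hn
          rw [Finset.mem_Ico] at hn
          have hcast : ((n - r : ℕ):ℝ) = (n:ℝ) - (r:ℝ) := by
            push_cast [Nat.cast_sub hn.1]; ring
          rw [hh_def]; simp only [hcast]
          have hnR : (r:ℝ) ≤ (n:ℝ) := by exact_mod_cast hn.1
          have hb1 : (1:ℝ) ≤ 1 + ((n:ℝ) - r) * r := by nlinarith
          have habs : (m:ℝ) - ((n:ℝ)+1)^2 ≤ 0 := by nlinarith
          have hge : 1 + ((n:ℝ) - r) * r ≤ 1 + |(m : ℝ) - ((n : ℝ) + 1) ^ 2| := by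
            rw [abs_of_nonpos habs]; nlinarith
          exact Real.rpow_le_rpow_of_nonpos (by linarith) hge (by linarith)
        refine this.trans ?_
        rw [Finset.sum_Ico_eq_sum_range]
        have : N - r = r + 1 := by omega
        rw [this]
        apply le_of_eq
        apply Finset.sum_congr rfl
        intro i _
        congr 1
        omega
      -- bound on ∑_{d ∈ range (r+1)} h d
      have hS : ∑ d ∈ range (r+1), h d ≤ 1 + 1/(1 - 2*c) := by
        rw [Finset.sum_range_succ']
        have h0 : h 0 = 1 := by
          rw [hh_def]; norm_num
        have hstep : ∑ d ∈ range r, h (d + 1) ≤ 1/(1 - 2*c) := by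
          have hterm : ∀ d ∈ range r, h (d + 1) ≤ ((d:ℝ) + 1) ^ (-(2*c)) * (r:ℝ) ^ (-(2*c)) := by
            intro d _
            rw [hh_def]
            have hb1 : (0:ℝ) < ((d:ℝ)+1) * r := by positivity
            have hge : ((d:ℝ)+1) * r ≤ 1 + ((d+1:ℕ):ℝ) * r := by push_cast; linarith
            calc (1 + ((d+1:ℕ):ℝ) * (r:ℝ)) ^ (-(2*c))
                ≤ (((d:ℝ)+1) * r) ^ (-(2*c)) :=
                  Real.rpow_le_rpow_of_nonpos hb1 hge (by linarith)
              _ = ((d:ℝ) + 1) ^ (-(2*c)) * (r:ℝ) ^ (-(2*c)) :=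
                  Real.mul_rpow (by positivity) (by positivity)
          calc ∑ d ∈ range r, h (d + 1)
              ≤ ∑ d ∈ range r, ((d:ℝ) + 1) ^ (-(2*c)) * (r:ℝ) ^ (-(2*c)) :=
                Finset.sum_le_sum hterm
            _ = (∑ d ∈ range r, ((d:ℝ) + 1) ^ (-(2*c))) * (r:ℝ) ^ (-(2*c)) := by
                rw [← Finset.sum_mul]
            _ ≤ ((r:ℝ) ^ (1 - 2*c) / (1 - 2*c)) * (r:ℝ) ^ (-(2*c)) := by
                apply mul_le_mul_of_nonneg_right
                  (jb_sum_rpow_le (by linarith) (by linarith) r)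
                  (Real.rpow_nonneg (by positivity) _)
            _ = (r:ℝ) ^ (1 - 4*c) / (1 - 2*c) := by
                rw [div_mul_eq_mul_div, ← Real.rpow_add (by linarith : (0:ℝ) < (r:ℝ))]
                ring_nf
            _ ≤ 1 / (1 - 2*c) := by
                apply div_le_div_of_nonneg_right ?_ (by linarith)
                exact Real.rpow_le_one_of_one_le_of_nonpos hr1R (by linarith)
        linarith [hstep, h0.ge, h0.le]
      calc ∑ n ∈ range N, f n = ∑ n ∈ range r, f n + ∑ n ∈ Ico r N, f n := hsplit2
        _ ≤ ∑ d ∈ range r, h d + ∑ d ∈ range (r+1), h d := add_le_add hA hB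
        _ ≤ ∑ d ∈ range (r+1), h d + ∑ d ∈ range (r+1), h d := by
            have : ∑ d ∈ range r, h d ≤ ∑ d ∈ range (r+1), h d :=
              Finset.sum_le_sum_of_subset_of_nonneg
                (Finset.range_subset_range.2 (by omega)) (fun i _ _ => hh0 i)
            linarith
        _ ≤ 2 + 2/(1 - 2*c) := by
            have h22 : 2/(1-2*c) = 2*(1/(1-2*c)) := by ring
            linarith [hS]
    calc ∑' n, f n = ∑ n ∈ range N, f n + ∑' n, f (n + N) := hsplit.symm
      _ ≤ (2 + 2/(1 - 2*c)) + C1 := add_le_add hhead htail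
      _ = 2 + 2/(1 - 2*c) + C1 := by ring

/-- For every `b > 1/4`, `sup_{m ∈ ℤ} Σ_{n ≥ 1} ⟨m − n²⟩^{−2b} < ∞`, where `⟨x⟩ = 1 + |x|`. -/
theorem japanese_bracket_sum (b : ℝ) (hb : 1 / 4 < b) :
    (∀ m : ℤ, Summable (fun n : ℕ => (1 + |(m : ℝ) - ((n : ℝ) + 1) ^ 2|) ^ (-(2 * b)))) ∧
    ∃ C : ℝ, ∀ m : ℤ,
      (∑' n : ℕ, (1 + |(m : ℝ) - ((n : ℝ) + 1) ^ 2|) ^ (-(2 * b))) ≤ C := by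
  set c : ℝ := min b (3/8) with hc_def
  have hc0 : 1/4 < c := lt_min hb (by norm_num)
  have hc1 : c < 1/2 := lt_of_le_of_lt (min_le_right _ _) (by norm_num)
  have hcb : c ≤ b := min_le_left _ _
  obtain ⟨C, hC⟩ := jb_key hc0 hc1
  have hpt : ∀ (m : ℤ) (n : ℕ),
      (1 + |(m : ℝ) - ((n : ℝ) + 1) ^ 2|) ^ (-(2 * b))
      ≤ (1 + |(m : ℝ) - ((n : ℝ) + 1) ^ 2|) ^ (-(2 * c)) := by
    intro m n
    apply Real.rpow_le_rpow_of_exponent_le (by simp [abs_nonneg]) (by linarith)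
  have hsum : ∀ m : ℤ, Summable (fun n : ℕ => (1 + |(m : ℝ) - ((n : ℝ) + 1) ^ 2|) ^ (-(2 * b))) :=
    fun m => Summable.of_nonneg_of_le
      (fun n => Real.rpow_nonneg (by positivity) _) (hpt m) (hC m).1
  refine ⟨hsum, C, fun m => ?_⟩
  exact le_trans (Summable.tsum_le_tsum (hpt m) (hsum m) (hC m).1) (hC m).2
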